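/- Let R be an integral domain that is not a field. Then R is a one-dimensional quasi-local domain (i.e., R has a unique maximal ideal and Krull dimension 1) if and only if every ideal valuation on R is constant on proper ideals, i.e., for every ideal valuation ν on R there exists c ∈ ℕ∞ such that ν(I) = c for every nonzero proper ideal I of R. -/

import Mathlib

/-- An ideal valuation on an integral domain `R`. -/
def IsIdealValuation (R : Type*) [CommRing R] (ν : Ideal R → ℕ∞) : Prop :=
  ν ⊥ = 0 ∧ ν ⊤ = ⊤ ∧
  (∀ I J : Ideal R, min (ν I) (ν J) ≤ ν (I * J)) ∧
  (∀ I : Ideal R, ν I = ⨆ (J : Ideal R) (_ : J ≤ I) (_ : J.FG), ν J)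

section Aux

variable {R : Type*} [CommRing R] {ν : Ideal R → ℕ∞}

lemma IsIdealValuation.mono (hv : IsIdealValuation R ν) : Monotone ν := by
  intro J I hJI
  rw [hv.2.2.2 J]
  refine iSup_le fun K => iSup_le fun hK => iSup_le fun hfg => ?_
  rw [hv.2.2.2 I]
  exact le_iSup_of_le K (le_iSup_of_le (hK.trans hJI) (le_iSup_of_le hfg le_rfl))

lemma IsIdealValuation.le_pow (hv : IsIdealValuation R ν) (I : Ideal R) (n : ℕ) :
    ν I ≤ ν (I ^ (n + 1)) := by
  induction n with
  | zero => simp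
  | succ n ih =>
    calc ν I ≤ min (ν (I ^ (n + 1))) (ν I) := le_min ih le_rfl
    _ ≤ ν (I ^ (n + 1) * I) := hv.2.2.1 _ _
    _ = ν (I ^ (n + 2)) := by rw [← pow_succ]

/-- Key lemma for the forward direction: in a one-dimensional quasi-local domain,
`ν J ≤ ν (a)` for any proper f.g. ideal `J` and nonzero nonunit `a`. -/
lemma IsIdealValuation.key [IsDomain R] [IsLocalRing R]
    (hmax : ∀ p : Ideal R, p.IsPrime → p ≠ ⊥ → p.IsMaximal)
    (hv : IsIdealValuation R ν) {J : Ideal R} (hJfg : J.FG) (hJtop : J ≠ ⊤)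
    {a : R} (ha0 : a ≠ 0) (_hau : ¬ IsUnit a) :
    ν J ≤ ν (Ideal.span {a}) := by
  have hrad : J ≤ (Ideal.span {a} : Ideal R).radical := by
    rw [Ideal.radical_eq_sInf]
    refine le_sInf ?_
    rintro q ⟨hq1, hq2⟩
    have haq : a ∈ q := hq1 (Ideal.mem_span_singleton_self a)
    have hq0 : q ≠ ⊥ := fun h => ha0 (by simpa [h, Ideal.mem_bot] using haq)
    have := IsLocalRing.eq_maximalIdeal (hmax q hq2 hq0)
    rw [this]
    exact IsLocalRing.le_maximalIdeal hJtop
  obtain ⟨n, hn⟩ := Ideal.exists_pow_le_of_le_radical_of_fg hrad hJfg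
  have h1 : J ^ (n + 1) ≤ Ideal.span {a} :=
    le_trans (Ideal.pow_le_pow_right (Nat.le_succ n)) hn
  exact le_trans (hv.le_pow J n) (hv.mono h1)

open Classical in
/-- The prime-indexed ideal valuation used in the backward direction. -/
noncomputable def primeVal (p : Ideal R) : Ideal R → ℕ∞ :=
  fun I => if I ≤ p then 0 else ⊤

lemma primeVal_of_le {p I : Ideal R} (h : I ≤ p) : primeVal p I = 0 := if_pos h

lemma primeVal_of_not_le {p I : Ideal R} (h : ¬ I ≤ p) : primeVal p I = ⊤ := if_neg h

lemma isIdealValuation_primeVal {p : Ideal R} (hp : p.IsPrime) :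
    IsIdealValuation R (primeVal p) := by
  refine ⟨primeVal_of_le bot_le,
    primeVal_of_not_le (fun h => hp.ne_top (top_le_iff.mp h)), ?_, ?_⟩
  · intro I J
    by_cases h : I * J ≤ p
    · rcases hp.mul_le.mp h with h' | h'
      · simp [primeVal_of_le h']
      · simp [primeVal_of_le h']
    · simp [primeVal_of_not_le h]
  · intro I
    by_cases hI : I ≤ p
    · rw [primeVal_of_le hI]
      refine le_antisymm zero_le ?_
      refine iSup_le fun K => iSup_le fun hK => iSup_le fun _ => ?_
      rw [primeVal_of_le (hK.trans hI)]
    · rw [primeVal_of_not_le hI]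
      refine le_antisymm ?_ le_top
      obtain ⟨x, hxI, hxp⟩ := SetLike.not_le_iff_exists.mp hI
      refine le_iSup_of_le (Ideal.span {x}) (le_iSup_of_le ?_ (le_iSup_of_le ?_ ?_))
      · exact (Ideal.span_singleton_le_iff_mem I).mpr hxI
      · exact ⟨{x}, by simp⟩
      · rw [primeVal_of_not_le]
        intro h
        exact hxp (h (Ideal.mem_span_singleton_self x))

end Aux

theorem oneDim_quasiLocal_iff_idealValuations_constant
    (R : Type*) [CommRing R] [IsDomain R] (hnf : ¬IsField R) :
    (IsLocalRing R ∧ ringKrullDim R = 1) ↔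
      (∀ ν : Ideal R → ℕ∞, IsIdealValuation R ν →
        ∃ c : ℕ∞, ∀ I : Ideal R, I ≠ ⊥ → I ≠ ⊤ → ν I = c) := by
  constructor
  · rintro ⟨hl, hdim⟩ ν hv
    -- every nonzero prime is maximal
    have hmax : ∀ p : Ideal R, p.IsPrime → p ≠ ⊥ → p.IsMaximal := by
      intro p hp hp0
      obtain ⟨m, hm, hpm⟩ := Ideal.exists_le_maximal p hp.ne_top
      by_cases hpme : p = m
      · exact hpme ▸ hm
      · exfalso
        have hlt1 : (⟨⊥, Ideal.bot_prime⟩ : PrimeSpectrum R) < ⟨p, hp⟩ := by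
          rw [← PrimeSpectrum.asIdeal_lt_asIdeal]
          exact bot_lt_iff_ne_bot.mpr hp0
        have hlt2 : (⟨p, hp⟩ : PrimeSpectrum R) < ⟨m, hm.isPrime⟩ := by
          rw [← PrimeSpectrum.asIdeal_lt_asIdeal]
          exact lt_of_le_of_ne hpm hpme
        let c : LTSeries (PrimeSpectrum R) :=
          ((RelSeries.singleton _ (⟨⊥, Ideal.bot_prime⟩ : PrimeSpectrum R)).snoc
            ⟨p, hp⟩ (by simpa using hlt1)).snoc ⟨m, hm.isPrime⟩ (by simpa using hlt2)
        have hlen : c.length = 2 := by simp [c, RelSeries.snoc, RelSeries.append]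
        have := Order.LTSeries.length_le_krullDim c
        rw [hlen, ← ringKrullDim, hdim] at this
        norm_num at this
    obtain ⟨a₀, ha0, hau⟩ := Ring.exists_not_isUnit_of_not_isField hnf
    refine ⟨ν (Ideal.span {a₀}), fun I hIbot hItop => ?_⟩
    refine le_antisymm ?_ ?_
    · rw [hv.2.2.2 I]
      refine iSup_le fun K => iSup_le fun hK => iSup_le fun hKfg => ?_
      have hKtop : K ≠ ⊤ := fun h => hItop (top_le_iff.mp (h ▸ hK))
      exact hv.key hmax hKfg hKtop ha0 hau
    · obtain ⟨t, htI, ht0⟩ := Submodule.exists_mem_ne_zero_of_ne_bot hIbot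
      have htu : ¬ IsUnit t := fun h => hItop (Ideal.eq_top_of_isUnit_mem I htI h)
      have h1 : ν (Ideal.span {a₀}) ≤ ν (Ideal.span {t}) := by
        refine hv.key hmax ⟨{a₀}, by simp⟩ ?_ ht0 htu
        exact fun h => hau (Ideal.span_singleton_eq_top.mp h)
      exact h1.trans (hv.mono ((Ideal.span_singleton_le_iff_mem I).mpr htI))
  · intro h
    have hloc : IsLocalRing R := by
      obtain ⟨m, hm⟩ := Ideal.exists_maximal R
      refine IsLocalRing.of_unique_max_ideal ⟨m, hm, fun m' hm' => ?_⟩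
      obtain ⟨c, hc⟩ := h _ (isIdealValuation_primeVal hm.isPrime)
      have hmb := Ring.ne_bot_of_isMaximal_of_not_isField hm hnf
      have hm'b := Ring.ne_bot_of_isMaximal_of_not_isField hm' hnf
      have e1 := hc m hmb hm.ne_top
      have e2 := hc m' hm'b hm'.ne_top
      rw [primeVal_of_le le_rfl] at e1
      by_cases hle : m' ≤ m
      · exact hm'.eq_of_le hm.ne_top hle
      · rw [primeVal_of_not_le hle, ← e1] at e2
        exact absurd e2.symm (by simp)
    refine ⟨hloc, le_antisymm ?_ ?_⟩
    · -- dimension at most one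
      have : Nonempty (PrimeSpectrum R) := inferInstance
      rw [ringKrullDim, Order.krullDim_eq_iSup_length]
      rw [show (1 : WithBot ℕ∞) = ((1 : ℕ∞) : WithBot ℕ∞) from rfl, WithBot.coe_le_coe]
      refine iSup_le fun p => ?_
      by_contra hlen
      have h2 : 2 ≤ p.length := by
        rw [not_le] at hlen
        exact_mod_cast hlen
      have h01 : p ⟨0, by omega⟩ < p ⟨1, by omega⟩ := p.strictMono (by simp [Fin.lt_def])
      have h12 : p ⟨1, by omega⟩ < p ⟨2, by omega⟩ := p.strictMono (by simp [Fin.lt_def])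
      set q1 := p ⟨1, by omega⟩
      set q2 := p ⟨2, by omega⟩
      obtain ⟨c, hc⟩ := h _ (isIdealValuation_primeVal q1.isPrime)
      have hq1b : q1.asIdeal ≠ ⊥ := by
        rw [← bot_lt_iff_ne_bot]
        calc (⊥ : Ideal R) ≤ (p ⟨0, by omega⟩).asIdeal := bot_le
        _ < q1.asIdeal := (PrimeSpectrum.asIdeal_lt_asIdeal _ _).mpr h01
      have hq2b : q2.asIdeal ≠ ⊥ := by
        rw [← bot_lt_iff_ne_bot]
        calc (⊥ : Ideal R) ≤ q1.asIdeal := bot_le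
        _ < q2.asIdeal := (PrimeSpectrum.asIdeal_lt_asIdeal _ _).mpr h12
      have e1 := hc q1.asIdeal hq1b q1.isPrime.ne_top
      have e2 := hc q2.asIdeal hq2b q2.isPrime.ne_top
      rw [primeVal_of_le le_rfl] at e1
      have hnle : ¬ q2.asIdeal ≤ q1.asIdeal := by
        intro hle
        exact absurd (le_antisymm hle (le_of_lt ((PrimeSpectrum.asIdeal_lt_asIdeal _ _).mpr h12)))
          (ne_of_gt ((PrimeSpectrum.asIdeal_lt_asIdeal _ _).mpr h12))
      rw [primeVal_of_not_le hnle, ← e1] at e2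
      exact absurd e2.symm (by simp)
    · -- dimension at least one
      obtain ⟨m, hm⟩ := Ideal.exists_maximal R
      have hmb := Ring.ne_bot_of_isMaximal_of_not_isField hm hnf
      have hlt : (⟨⊥, Ideal.bot_prime⟩ : PrimeSpectrum R) < ⟨m, hm.isPrime⟩ := by
        rw [← PrimeSpectrum.asIdeal_lt_asIdeal]
        exact bot_lt_iff_ne_bot.mpr hmb
      let c : LTSeries (PrimeSpectrum R) :=
        (RelSeries.singleton _ (⟨⊥, Ideal.bot_prime⟩ : PrimeSpectrum R)).snoc
          ⟨m, hm.isPrime⟩ (by simpa using hlt)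
      have hlen : c.length = 1 := by simp [c, RelSeries.snoc, RelSeries.append]
      have := Order.LTSeries.length_le_krullDim c
      rw [hlen, ← ringKrullDim] at this
      exact_mod_cast this
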